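/- arXiv:2307.01648 — 2 statements merged into one kernel-verified Lean document; each statement's English description precedes it below -/
import Mathlib

section
/- For any Parikh vector P with total length n = Σ_i P[i], the diameter of the configuration graph G(P) is at most n − max_{i∈Σ} P[i]: any word w with Parikh vector P can be transformed into any word v with the same Parikh vector using at most n − max_i P[i] 2-swaps. -/
open Finset


/-- The Parikh vector of a word `w : Fin n → Fin σ`. -/
def parikh {n σ : ℕ} (w : Fin n → Fin σ) : Fin σ → ℕ :=
  fun a => (Finset.univ.filter fun i => w i = a).card

/-- Words of length `n` over alphabet `Fin σ` with Parikh vector `P`. -/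
abbrev Words (n σ : ℕ) (P : Fin σ → ℕ) := {w : Fin n → Fin σ // parikh w = P}

/-- `u` is obtained from `w` by a single 2-swap. -/
def isSwap {n σ : ℕ} (w u : Fin n → Fin σ) : Prop :=
  ∃ i j : Fin n, i ≠ j ∧ w i ≠ w j ∧ u = w ∘ Equiv.swap i j

/-- The configuration graph `G(P)`. -/
def configGraph (n σ : ℕ) (P : Fin σ → ℕ) : SimpleGraph (Words n σ P) :=
  SimpleGraph.fromRel fun w u => isSwap w.1 u.1


lemma parikh_comp_equiv {n σ : ℕ} (w : Fin n → Fin σ) (e : Equiv.Perm (Fin n)) :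
    parikh (w ∘ e) = parikh w := by
  funext a
  unfold parikh
  apply Finset.card_bij (fun i _ => e i)
  · intro i hi
    simp only [mem_filter, mem_univ, true_and, Function.comp] at hi ⊢
    exact hi
  · intro i _ j _ h
    exact e.injective h
  · intro j hj
    simp only [mem_filter, mem_univ, true_and, Function.comp] at hj ⊢
    exact ⟨e.symm j, by simp [hj], by simp⟩

lemma count_split {n σ : ℕ} (w v : Fin n → Fin σ) (b : Fin σ) :
    (univ.filter fun j => w j = b).card
      = (univ.filter fun j => w j = b ∧ v j = b).card
        + (univ.filter fun j => w j = b ∧ v j ≠ b).card := by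
  rw [← filter_filter, ← filter_filter,
    card_filter_add_card_filter_not]

lemma count_eq {n σ : ℕ} {w v : Fin n → Fin σ} (h : parikh w = parikh v) (b : Fin σ) :
    (univ.filter fun j => w j = b ∧ v j ≠ b).card
      = (univ.filter fun j => v j = b ∧ w j ≠ b).card := by
  have h1 := count_split w v b
  have h2 := count_split v w b
  have hb : (univ.filter fun j => w j = b).card = (univ.filter fun j => v j = b).card := by
    have := congrFun h b
    unfold parikh at this
    exact this
  have hsymm : (univ.filter fun j => w j = b ∧ v j = b)
      = (univ.filter fun j => v j = b ∧ w j = b) := by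
    apply filter_congr
    intro j _
    simp [and_comm]
  rw [hsymm] at h1
  omega

lemma key {n σ : ℕ} (P : Fin σ → ℕ) (a : Fin σ) :
    ∀ m (w v : Words n σ P),
      (univ.filter fun i => w.1 i ≠ v.1 i).card ≤ m →
      ∃ p : (configGraph n σ P).Walk w v,
        p.length + (univ.filter fun i => w.1 i ≠ v.1 i ∧ v.1 i = a).card
          ≤ (univ.filter fun i => w.1 i ≠ v.1 i).card := by
  intro m
  induction m with
  | zero =>
    intro w v hf
    have hwv : w = v := by
      apply Subtype.ext
      funext i
      by_contra hne
      have : i ∈ univ.filter fun i => w.1 i ≠ v.1 i := by simp [hne]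
      have := card_pos.mpr ⟨i, this⟩
      omega
    subst hwv
    refine ⟨SimpleGraph.Walk.nil, ?_⟩
    simp only [SimpleGraph.Walk.length_nil, zero_add]
    exact card_le_card (fun x hx => by
      simp only [mem_filter] at hx ⊢
      exact ⟨hx.1, hx.2.1⟩)
  | succ m ih =>
    intro w v hf
    rcases Nat.lt_or_ge (univ.filter fun i => w.1 i ≠ v.1 i).card (m+1) with hlt | hge
    · exact ih w v (Nat.lt_succ_iff.mp hlt)
    have hfcard : (univ.filter fun i => w.1 i ≠ v.1 i).card = m + 1 := le_antisymm hf hge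
    have hP : parikh w.1 = parikh v.1 := w.2.trans v.2.symm
    -- Step 1: find a mismatch i whose target letter is not a
    have hex : ∃ i, w.1 i ≠ v.1 i ∧ v.1 i ≠ a := by
      by_contra hcon
      push_neg at hcon
      have h1 : (univ.filter fun j => w.1 j = a ∧ v.1 j ≠ a) = ∅ := by
        ext j
        simp only [mem_filter, mem_univ, true_and, notMem_empty, iff_false, not_and]
        intro hwj hvj
        exact hvj (hcon j (by rw [hwj]; exact fun h => hvj h.symm))
      have h2 := count_eq hP a
      rw [h1, card_empty] at h2
      obtain ⟨i, hi⟩ : ∃ i, w.1 i ≠ v.1 i := by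
        have hpos : (univ.filter fun i => w.1 i ≠ v.1 i).Nonempty :=
          card_pos.mp (by omega)
        obtain ⟨i, hi⟩ := hpos
        exact ⟨i, (mem_filter.mp hi).2⟩
      have hva := hcon i hi
      have hmem : i ∈ univ.filter fun j => v.1 j = a ∧ w.1 j ≠ a := by
        simp only [mem_filter, mem_univ, true_and]
        exact ⟨hva, by rw [← hva]; exact hi⟩
      have := card_pos.mpr ⟨i, hmem⟩
      omega
    obtain ⟨i, hwi, hvia⟩ := hex
    set b := v.1 i with hb
    -- Step 2: find j with w j = b, v j ≠ b
    have hexj : ∃ j, w.1 j = b ∧ v.1 j ≠ b := by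
      have hmem : i ∈ univ.filter fun j => v.1 j = b ∧ w.1 j ≠ b := by
        simp only [mem_filter, mem_univ, true_and]
        exact ⟨rfl, fun h => hwi h⟩
      have hpos := card_pos.mpr ⟨i, hmem⟩
      rw [← count_eq hP b] at hpos
      obtain ⟨j, hj⟩ := card_pos.mp hpos
      simp only [mem_filter, mem_univ, true_and] at hj
      exact ⟨j, hj⟩
    obtain ⟨j, hwj, hvj⟩ := hexj
    have hij : i ≠ j := fun h => hwi (by rw [h, hwj])
    have hwij : w.1 i ≠ w.1 j := by rw [hwj]; exact hwi
    -- the swapped word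
    have hupar : parikh (w.1 ∘ Equiv.swap i j) = P := by
      rw [parikh_comp_equiv]; exact w.2
    set u : Words n σ P := ⟨w.1 ∘ Equiv.swap i j, hupar⟩ with hu
    have hui : u.1 i = v.1 i := by
      simp only [hu, Function.comp_apply, Equiv.swap_apply_left]
      exact hwj
    have huj : u.1 j = w.1 i := by
      simp only [hu, Function.comp_apply, Equiv.swap_apply_right]
    have huk : ∀ k, k ≠ i → k ≠ j → u.1 k = w.1 k := by
      intro k hki hkj
      simp only [hu, Function.comp_apply, Equiv.swap_apply_of_ne_of_ne hki hkj]
    have hadj : (configGraph n σ P).Adj w u := by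
      rw [configGraph, SimpleGraph.fromRel_adj]
      constructor
      · intro h
        exact hwi ((congrArg (fun z => z.1 i) h).trans hui)
      · exact Or.inl ⟨i, j, hij, hwij, rfl⟩
    -- membership facts
    have hiFw : i ∈ univ.filter fun k => w.1 k ≠ v.1 k := by simp only [mem_filter, mem_univ, true_and]; exact hwi
    have hjFw : j ∈ univ.filter fun k => w.1 k ≠ v.1 k := by
      simp only [mem_filter, mem_univ, true_and]
      rw [hwj]; exact fun h => hvj h.symm
    -- Fu bound
    have hFusub : (univ.filter fun k => u.1 k ≠ v.1 k)
        ⊆ (univ.filter fun k => w.1 k ≠ v.1 k).erase i := by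
      intro k hk
      simp only [mem_filter, mem_univ, true_and] at hk
      rw [mem_erase]
      have hki : k ≠ i := by rintro rfl; exact hk hui
      refine ⟨hki, ?_⟩
      by_cases hkj : k = j
      · subst hkj; exact hjFw
      · simp only [mem_filter, mem_univ, true_and]
        rw [← huk k hki hkj]; exact hk
    have hfu_le : (univ.filter fun k => u.1 k ≠ v.1 k).card ≤ m := by
      have := card_le_card hFusub
      rw [card_erase_of_mem hiFw, hfcard] at this
      omega
    obtain ⟨p', hp'⟩ := ih u v hfu_le
    refine ⟨SimpleGraph.Walk.cons hadj p', ?_⟩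
    rw [SimpleGraph.Walk.length_cons]
    -- potential decrease: fu + g + 1 ≤ f + gu
    have hkey : (univ.filter fun k => u.1 k ≠ v.1 k).card
        + (univ.filter fun k => w.1 k ≠ v.1 k ∧ v.1 k = a).card + 1
        ≤ (univ.filter fun k => w.1 k ≠ v.1 k).card
          + (univ.filter fun k => u.1 k ≠ v.1 k ∧ v.1 k = a).card := by
      by_cases hfix : u.1 j = v.1 j
      -- Case A: j got fixed too
      · have hFusub2 : (univ.filter fun k => u.1 k ≠ v.1 k)
            ⊆ ((univ.filter fun k => w.1 k ≠ v.1 k).erase i).erase j := by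
          intro k hk
          have hk' := hFusub hk
          rw [mem_erase]
          simp only [mem_filter, mem_univ, true_and] at hk
          refine ⟨?_, hk'⟩
          rintro rfl
          exact hk hfix
        have hjmem : j ∈ (univ.filter fun k => w.1 k ≠ v.1 k).erase i :=
          mem_erase.mpr ⟨fun h => hij h.symm, hjFw⟩
        have hfu2 : (univ.filter fun k => u.1 k ≠ v.1 k).card ≤ m - 1 := by
          have := card_le_card hFusub2
          rw [card_erase_of_mem hjmem, card_erase_of_mem hiFw, hfcard] at this
          omega
        have hGsub : (univ.filter fun k => w.1 k ≠ v.1 k ∧ v.1 k = a)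
            ⊆ insert j (univ.filter fun k => u.1 k ≠ v.1 k ∧ v.1 k = a) := by
          intro k hk
          simp only [mem_filter, mem_univ, true_and] at hk
          rw [mem_insert]
          by_cases hkj : k = j
          · exact Or.inl hkj
          · have hki : k ≠ i := by rintro rfl; exact hvia hk.2
            refine Or.inr ?_
            simp only [mem_filter, mem_univ, true_and]
            exact ⟨fun hh => hk.1 ((huk k hki hkj).symm.trans hh), hk.2⟩
        have hg_le : (univ.filter fun k => w.1 k ≠ v.1 k ∧ v.1 k = a).card
            ≤ (univ.filter fun k => u.1 k ≠ v.1 k ∧ v.1 k = a).card + 1 := by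
          calc _ ≤ (insert j (univ.filter fun k => u.1 k ≠ v.1 k ∧ v.1 k = a)).card :=
                card_le_card hGsub
            _ ≤ _ := card_insert_le _ _
        -- need m ≥ 1: i and j distinct in Fw so f ≥ 2
        have hf2 : 2 ≤ m + 1 := by
          have : ({i, j} : Finset (Fin n)) ⊆ univ.filter fun k => w.1 k ≠ v.1 k := by
            intro k hk
            rcases mem_insert.mp hk with h | h
            · subst h; exact hiFw
            · rw [mem_singleton] at h; subst h; exact hjFw
          have := card_le_card this
          rw [card_insert_of_notMem (by simp [hij]), card_singleton, hfcard] at this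
          omega
        omega
      -- Case B: j still mismatched
      · have hGsub : (univ.filter fun k => w.1 k ≠ v.1 k ∧ v.1 k = a)
            ⊆ (univ.filter fun k => u.1 k ≠ v.1 k ∧ v.1 k = a) := by
          intro k hk
          simp only [mem_filter, mem_univ, true_and] at hk ⊢
          by_cases hkj : k = j
          · subst hkj; exact ⟨hfix, hk.2⟩
          · have hki : k ≠ i := by rintro rfl; exact hvia hk.2
            exact ⟨fun hh => hk.1 ((huk k hki hkj).symm.trans hh), hk.2⟩
        have hg_le := card_le_card hGsub
        omega
    omega

theorem stmt11 (n σ : ℕ) (P : Fin σ → ℕ) (hn : ∑ i, P i = n)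
    (w v : Words n σ P) :
    (configGraph n σ P).dist w v ≤ n - Finset.univ.sup P := by
  rcases Nat.eq_zero_or_pos σ with hσ | hσ
  · subst hσ
    have hn0 : n = 0 := by simpa using hn.symm
    have hwv : w = v := Subtype.ext (funext fun i => absurd (i.2.trans_eq hn0) (Nat.not_lt_zero _))
    rw [hwv, SimpleGraph.dist_self]
    exact Nat.zero_le _
  · obtain ⟨a, -, ha⟩ := Finset.exists_mem_eq_sup (univ : Finset (Fin σ))
      ⟨⟨0, hσ⟩, mem_univ _⟩ P
    obtain ⟨p, hp⟩ := key P a (univ.filter fun i => w.1 i ≠ v.1 i).card w v le_rfl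
    have hd := SimpleGraph.dist_le p
    -- count facts
    have hsplit : (univ.filter fun i => w.1 i = v.1 i).card
        + (univ.filter fun i => ¬ (w.1 i = v.1 i)).card = n := by
      rw [card_filter_add_card_filter_not, card_univ, Fintype.card_fin]
    have hPa : (univ.filter fun i => v.1 i = a).card = P a := congrFun v.2 a
    have hsplita : (univ.filter fun i => v.1 i = a).card
        = (univ.filter fun i => v.1 i = a ∧ w.1 i = v.1 i).card
          + (univ.filter fun i => v.1 i = a ∧ ¬ (w.1 i = v.1 i)).card := by
      rw [← filter_filter, ← filter_filter, card_filter_add_card_filter_not]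
    have hMsub : (univ.filter fun i => v.1 i = a ∧ w.1 i = v.1 i)
        ⊆ (univ.filter fun i => w.1 i = v.1 i) := by
      intro k hk
      simp only [mem_filter, mem_univ, true_and] at hk ⊢
      exact hk.2
    have hM := card_le_card hMsub
    have hgeq : (univ.filter fun i => v.1 i = a ∧ ¬ (w.1 i = v.1 i))
        = (univ.filter fun i => w.1 i ≠ v.1 i ∧ v.1 i = a) := by
      apply filter_congr
      intro k _
      simp [and_comm]
    rw [hgeq] at hsplita
    have hflip : (univ.filter fun i => ¬ (w.1 i = v.1 i))
        = (univ.filter fun i => w.1 i ≠ v.1 i) := rfl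
    rw [hflip] at hsplit
    rw [ha]
    omega
end

section
/- For any Parikh vector P with at least two nonzero entries and total length n, the diameter of the configuration graph G(P) is at least n − max_{i∈Σ} P[i]; in particular there exist two words with Parikh vector P at 2-swap distance exactly n − max_i P[i]. -/
lemma card_filter_get {α : Type*} (L : List α) (p : α → Prop) [DecidablePred p] :
    (Finset.univ.filter fun i : Fin L.length => p (L.get i)).card
      = L.countP (fun a => decide (p a)) := by
  rw [Fin.univ_def]
  rw [Finset.card_def, Finset.filter_val]
  simp only [Multiset.filter_coe, Multiset.coe_card]
  rw [← List.countP_eq_length_filter]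
  conv_rhs => rw [← List.map_get_finRange L]
  rw [List.countP_map]
  rfl

lemma card_filter_get' {α : Type*} {n : ℕ} (L : List α) (h : L.length = n)
    (p : α → Prop) [DecidablePred p] :
    (Finset.univ.filter fun i : Fin n => p (L.get (Fin.cast h.symm i))).card
      = L.countP (fun a => decide (p a)) := by
  subst h
  simpa using card_filter_get L p

lemma zip_flatMap {α β γ : Type*} (f : γ → List α) (g : γ → List β) :
    ∀ (l : List γ), (∀ c ∈ l, (f c).length = (g c).length) →
      (l.flatMap f).zip (l.flatMap g) = l.flatMap (fun c => (f c).zip (g c))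
  | [], _ => rfl
  | c :: l, h => by
      simp only [List.flatMap_cons]
      rw [List.zip_append (h c List.mem_cons_self),
        zip_flatMap f g l (fun d hd => h d (List.mem_cons_of_mem _ hd))]

lemma countP_zip_chain {α : Type*} (p : α × α → Bool) (b : α) :
    ∀ (t : List α) (x : α), List.Chain (fun u v => p (u, v) = true) x t →
      List.countP p ((x :: t).zip (t ++ [b]))
        = t.length + (if p ((x :: t).getLast (by simp), b) then 1 else 0)
  | [], x, _ => by simp [List.countP_cons]; congr 1
  | y :: t, x, h => by
      replace h := List.isChain_cons_cons.mp h
      have : ((x :: y :: t).zip ((y :: t) ++ [b])) = (x, y) :: ((y :: t).zip (t ++ [b])) := by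
        simp
      rw [this, List.countP_cons, countP_zip_chain p b t y h.2]
      have hl : (x :: y :: t).getLast (by simp) = (y :: t).getLast (by simp) := by
        simp [List.getLast_cons]
      rw [hl]
      simp only [h.1, if_true, List.length_cons]
      omega

section Construction
variable {σ : ℕ} (P : Fin σ → ℕ) (a : Fin σ)

def rho (x : Fin σ) : ℕ := if x = a then 0 else x.val + 1

def blkT (j : ℕ) : List (Fin σ) :=
  (List.finRange σ).filter (fun x => decide (x ≠ a) && decide (j < P x))

def blk (j : ℕ) : List (Fin σ) := a :: blkT P a j

lemma mem_blkT {j : ℕ} {x : Fin σ} (hx : x ∈ blkT P a j) : x ≠ a ∧ j < P x := by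
  simpa [blkT, List.mem_filter] using hx

lemma rho_a : rho a a = 0 := by simp [rho]

lemma rho_lt_of_lt {u v : Fin σ} (hu : u ≠ a) (hv : v ≠ a) (h : u < v) :
    rho a u < rho a v := by
  simp only [rho, if_neg hu, if_neg hv]
  exact Nat.succ_lt_succ h

lemma rho_pos {x : Fin σ} (hx : x ≠ a) : 0 < rho a x := by
  simp [rho, hx]

lemma rho_inj {u v : Fin σ} (h : rho a u = rho a v) : u = v := by
  by_cases hu : u = a <;> by_cases hv : v = a <;>
    simp_all [rho] <;> exact Fin.ext (by omega)

lemma blkT_pairwise (j : ℕ) : (blkT P a j).Pairwise (fun u v => rho a u < rho a v) := by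
  apply List.Pairwise.imp_of_mem
    (S := fun u v => rho a u < rho a v) ?_
    ((List.pairwise_lt_finRange σ).sublist List.filter_sublist)
  intro u v hu hv huv
  exact rho_lt_of_lt a (mem_blkT P a hu).1 (mem_blkT P a hv).1 huv

lemma blk_pairwise (j : ℕ) : (blk P a j).Pairwise (fun u v => rho a u < rho a v) := by
  rw [blk, List.pairwise_cons]
  refine ⟨fun y hy => ?_, blkT_pairwise P a j⟩
  rw [rho_a]
  exact rho_pos a (mem_blkT P a hy).1

lemma count_blk {j : ℕ} (hj : j < P a) (x : Fin σ) :
    (blk P a j).count x = if j < P x then 1 else 0 := by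
  rw [blk, List.count_cons]
  by_cases hx : x = a
  · have h0 : (blkT P a j).count x = 0 := by
      rw [List.count_eq_zero]
      intro hmem
      exact absurd hx (mem_blkT P a hmem).1
    rw [hx] at h0 ⊢
    simp [h0, hj]
  · have : (blkT P a j).count x = if j < P x then 1 else 0 := by
      by_cases hjx : j < P x
      · rw [if_pos hjx]
        apply List.count_eq_one_of_mem
        · exact (List.nodup_finRange σ).filter _
        · simp [blkT, List.mem_filter, hx, hjx]
      · rw [if_neg hjx, List.count_eq_zero]
        intro hmem
        exact hjx (mem_blkT P a hmem).2
    simp [this, hx, Ne.symm hx]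

lemma length_eq_sum_count {m : ℕ} (l : List (Fin m)) : l.length = ∑ x : Fin m, l.count x := by
  have h1 := Multiset.toFinset_sum_count_eq (l : Multiset (Fin m))
  rw [Finset.sum_subset (Finset.subset_univ _)] at h1
  · simpa using h1.symm
  · intro x _ hx
    simp only [Multiset.mem_toFinset] at hx
    simpa using Multiset.count_eq_zero_of_notMem hx

end Construction

section Construction2
variable {σ : ℕ} (P : Fin σ → ℕ) (a : Fin σ)

lemma list_range_sum (f : ℕ → ℕ) (m : ℕ) :
    ((List.range m).map f).sum = ∑ j ∈ Finset.range m, f j := by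
  induction m with
  | zero => simp
  | succ k ih => simp [List.range_succ, Finset.sum_range_succ, ih]

lemma sum_ite_lt {p m : ℕ} (hpm : p ≤ m) :
    (∑ j ∈ Finset.range m, if j < p then 1 else 0) = p := by
  have h : Finset.filter (fun j => j < p) (Finset.range m) = Finset.range p := by
    ext j
    simp only [Finset.mem_filter, Finset.mem_range]
    omega
  rw [Finset.sum_boole, h]
  simp

def WL : List (Fin σ) := (List.range (P a)).flatMap (blk P a)
def VL : List (Fin σ) := (List.range (P a)).flatMap (fun j => (blk P a j).rotate 1)

lemma count_WL (hmax : ∀ x, P x ≤ P a) (x : Fin σ) : (WL P a).count x = P x := by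
  rw [WL, List.count_flatMap]
  simp only [Function.comp_def]
  rw [list_range_sum (fun j => ((blk P a j).count x)) (P a)]
  rw [Finset.sum_congr rfl (fun j hj => count_blk P a (Finset.mem_range.mp hj) x)]
  exact sum_ite_lt (hmax x)

lemma count_VL (hmax : ∀ x, P x ≤ P a) (x : Fin σ) : (VL P a).count x = P x := by
  rw [VL, List.count_flatMap]
  simp only [Function.comp_def]
  have : ∀ j : ℕ, ((blk P a j).rotate 1).count x = (blk P a j).count x :=
    fun j => (List.rotate_perm _ 1).count_eq x
  rw [show (fun j => List.count x ((blk P a j).rotate 1)) = fun j => (blk P a j).count x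
      from funext fun j => this j]
  rw [list_range_sum (fun j => ((blk P a j).count x)) (P a)]
  rw [Finset.sum_congr rfl (fun j hj => count_blk P a (Finset.mem_range.mp hj) x)]
  exact sum_ite_lt (hmax x)

lemma length_WL (hmax : ∀ x, P x ≤ P a) : (WL P a).length = ∑ x, P x := by
  rw [length_eq_sum_count]
  exact Finset.sum_congr rfl (fun x _ => count_WL P a hmax x)

lemma length_VL (hmax : ∀ x, P x ≤ P a) : (VL P a).length = ∑ x, P x := by
  rw [length_eq_sum_count]
  exact Finset.sum_congr rfl (fun x _ => count_VL P a hmax x)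

lemma ZL_eq : (WL P a).zip (VL P a)
    = (List.range (P a)).flatMap (fun j => (blk P a j).zip ((blk P a j).rotate 1)) := by
  rw [WL, VL]
  exact zip_flatMap _ _ _ (fun j _ => (List.length_rotate _ 1).symm)

end Construction2

section Construction3
variable {σ : ℕ} (P : Fin σ → ℕ) (a : Fin σ)

lemma rotate_blk (j : ℕ) : (blk P a j).rotate 1 = blkT P a j ++ [a] := by
  rw [blk, List.rotate_cons_succ, List.rotate_zero]

lemma countF1 (j : ℕ) :
    List.countP (fun q => decide (rho a q.1 < rho a q.2))
        ((blk P a j).zip ((blk P a j).rotate 1))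
      = (blk P a j).length - 1 := by
  rw [rotate_blk]
  conv_lhs => rw [blk]
  have hch : List.Chain (fun u v => (decide (rho a u < rho a v)) = true) a (blkT P a j) := by
    have h1 : List.Chain' (fun u v => rho a u < rho a v) (a :: blkT P a j) :=
      (blk_pairwise P a j).isChain
    exact (h1 : List.Chain _ a _).imp (fun u v h => by simpa)
  rw [countP_zip_chain _ a _ a hch]
  have hno : ¬ (rho a ((a :: blkT P a j).getLast (by simp)) < rho a a) := by
    rw [rho_a]; omega
  simp only [decide_eq_true_eq, hno, if_neg, decide_eq_false_iff_not]
  simp [blk]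

lemma countF2 (j : ℕ) :
    List.countP (fun q => decide (q.1 ≠ a) && decide (q.1 ≠ q.2))
        ((blk P a j).zip ((blk P a j).rotate 1))
      = (blk P a j).length - 1 := by
  rw [rotate_blk]
  conv_lhs => rw [blk]
  rcases hT : blkT P a j with _ | ⟨y, t'⟩
  · simp [blk, hT]
  · have hmem : ∀ z ∈ blkT P a j, z ≠ a := fun z hz => (mem_blkT P a hz).1
    have hpw : List.Pairwise (fun u v => ((decide (u ≠ a) && decide (u ≠ v)) = true)) (y :: t') := by
      rw [← hT]
      apply List.Pairwise.imp_of_mem ?_ (blkT_pairwise P a j)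
      intro u v hu hv huv
      simp only [Bool.and_eq_true, decide_eq_true_eq]
      exact ⟨hmem u hu, fun he => Nat.ne_of_lt huv (congrArg (rho a) he)⟩
    rw [show ((a :: y :: t').zip (y :: t' ++ [a])) = (a, y) :: ((y :: t').zip (t' ++ [a])) from rfl]
    rw [List.countP_cons]
    have hp0 : (decide (a ≠ a) && decide (a ≠ y)) = false := by simp
    rw [hp0]
    have hch : List.Chain (fun u v => ((decide (u ≠ a) && decide (u ≠ v)) = true)) y t' :=
      (hpw.isChain : List.Chain _ y t')
    rw [countP_zip_chain _ a t' y hch]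
    have hlast : ((y :: t').getLast (by simp)) ≠ a := by
      apply hmem
      rw [hT]
      exact List.getLast_mem _
    have : (decide (((y :: t').getLast (by simp)) ≠ a)
        && decide (((y :: t').getLast (by simp)) ≠ a)) = true := by simp [hlast]
    rw [this]
    simp [blk, hT]
end Construction3

section Construction4
variable {σ : ℕ} (P : Fin σ → ℕ) (a : Fin σ)

lemma sum_blk_length (hmax : ∀ x, P x ≤ P a) :
    ∑ j ∈ Finset.range (P a), (blk P a j).length = ∑ x, P x := by
  have h := length_WL P a hmax
  rw [WL, List.length_flatMap] at h
  rw [← list_range_sum (fun j => (blk P a j).length) (P a)]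
  rw [← h]

lemma sum_blk_length_sub (hmax : ∀ x, P x ≤ P a) :
    ∑ j ∈ Finset.range (P a), ((blk P a j).length - 1) = (∑ x, P x) - P a := by
  have h1 : ∑ j ∈ Finset.range (P a), ((blk P a j).length - 1) + P a
      = ∑ j ∈ Finset.range (P a), (blk P a j).length := by
    have e1 : ∀ j ∈ Finset.range (P a),
        (blk P a j).length = ((blk P a j).length - 1) + 1 := by
      intro j _
      have : (blk P a j).length = (blkT P a j).length + 1 := by simp [blk]
      omega
    rw [Finset.sum_congr rfl e1, Finset.sum_add_distrib]
    simp
  have h2 := sum_blk_length P a hmax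
  have h3 : P a ≤ ∑ x, P x := by
    exact Finset.single_le_sum (f := P) (fun x _ => Nat.zero_le _) (Finset.mem_univ a)
  omega

lemma countP_total (p : Fin σ × Fin σ → Bool)
    (hp : ∀ j, j < P a → List.countP p ((blk P a j).zip ((blk P a j).rotate 1))
        = (blk P a j).length - 1)
    (hmax : ∀ x, P x ≤ P a) :
    List.countP p ((WL P a).zip (VL P a)) = (∑ x, P x) - P a := by
  rw [ZL_eq, List.countP_flatMap]
  rw [show (List.countP p ∘ fun j => (blk P a j).zip ((blk P a j).rotate 1))
      = fun j => List.countP p ((blk P a j).zip ((blk P a j).rotate 1)) from rfl]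
  rw [list_range_sum]
  rw [Finset.sum_congr rfl (fun j hj => hp j (Finset.mem_range.mp hj))]
  exact sum_blk_length_sub P a hmax

lemma countP_F1_total (hmax : ∀ x, P x ≤ P a) :
    List.countP (fun q => decide (rho a q.1 < rho a q.2)) ((WL P a).zip (VL P a))
      = (∑ x, P x) - P a :=
  countP_total P a _ (fun j _ => countF1 P a j) hmax

lemma countP_F2_total (hmax : ∀ x, P x ≤ P a) :
    List.countP (fun q => decide (q.1 ≠ a) && decide (q.1 ≠ q.2)) ((WL P a).zip (VL P a))
      = (∑ x, P x) - P a :=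
  countP_total P a _ (fun j _ => countF2 P a j) hmax

end Construction4

section Graph
variable {n σ : ℕ}

lemma parikh_comp_perm (u : Fin n → Fin σ) (e : Equiv.Perm (Fin n)) :
    parikh (u ∘ e) = parikh u := by
  funext x
  show (Finset.univ.filter fun i => u (e i) = x).card = (Finset.univ.filter fun i => u i = x).card
  rw [← Fintype.card_subtype, ← Fintype.card_subtype]
  exact Fintype.card_congr (Equiv.subtypeEquiv e (fun i => Iff.rfl))

lemma phi_lipschitz (g : Fin n → Prop) [DecidablePred g] (t : Fin n → ℕ) (ρ : Fin σ → ℕ)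
    (u : Fin n → Fin σ) (i j : Fin n) :
    (Finset.univ.filter fun k => g k ∧ t k ≤ ρ ((u ∘ Equiv.swap i j) k)).card
      ≤ (Finset.univ.filter fun k => g k ∧ t k ≤ ρ (u k)).card + 1 := by
  rcases le_total (ρ (u i)) (ρ (u j)) with hle | hle
  · calc (Finset.univ.filter fun k => g k ∧ t k ≤ ρ ((u ∘ Equiv.swap i j) k)).card
        ≤ (insert i (Finset.univ.filter fun k => g k ∧ t k ≤ ρ (u k))).card := by
          apply Finset.card_le_card
          intro k hk
          rw [Finset.mem_filter] at hk
          rw [Finset.mem_insert]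
          by_cases hki : k = i
          · exact Or.inl hki
          · right
            rw [Finset.mem_filter]
            refine ⟨Finset.mem_univ k, hk.2.1, ?_⟩
            by_cases hkj : k = j
            · have h2 : (u ∘ Equiv.swap i j) k = u i := by rw [hkj]; simp
              rw [h2] at hk
              exact le_trans hk.2.2 (by rw [hkj]; exact hle)
            · have : (u ∘ Equiv.swap i j) k = u k := by
                simp [Equiv.swap_apply_of_ne_of_ne hki hkj]
              rw [this] at hk
              exact hk.2.2
      _ ≤ _ := Finset.card_insert_le _ _
  · calc (Finset.univ.filter fun k => g k ∧ t k ≤ ρ ((u ∘ Equiv.swap i j) k)).card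
        ≤ (insert j (Finset.univ.filter fun k => g k ∧ t k ≤ ρ (u k))).card := by
          apply Finset.card_le_card
          intro k hk
          rw [Finset.mem_filter] at hk
          rw [Finset.mem_insert]
          by_cases hkj : k = j
          · exact Or.inl hkj
          · right
            rw [Finset.mem_filter]
            refine ⟨Finset.mem_univ k, hk.2.1, ?_⟩
            by_cases hki : k = i
            · have h2 : (u ∘ Equiv.swap i j) k = u j := by rw [hki]; simp
              rw [h2] at hk
              exact le_trans hk.2.2 (by rw [hki]; exact hle)
            · have : (u ∘ Equiv.swap i j) k = u k := by
                simp [Equiv.swap_apply_of_ne_of_ne hki hkj]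
              rw [this] at hk
              exact hk.2.2
      _ ≤ _ := Finset.card_insert_le _ _

end Graph

section Upper
variable {n σ : ℕ} {P : Fin σ → ℕ}

lemma exists_mismatch_partner {u v : Fin n → Fin σ} (hu : parikh u = parikh v)
    {i : Fin n} {x : Fin σ} (hvx : v i = x) (hux : u i ≠ x) :
    ∃ j, u j = x ∧ v j ≠ x := by
  by_contra hcon
  push_neg at hcon
  have hsub : (Finset.univ.filter fun k => u k = x) ⊆ (Finset.univ.filter fun k => v k = x) := by
    intro k hk
    rw [Finset.mem_filter] at hk ⊢
    exact ⟨hk.1, hcon k hk.2⟩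
  have hcard : (Finset.univ.filter fun k => v k = x).card
      ≤ (Finset.univ.filter fun k => u k = x).card :=
    le_of_eq (congrFun hu x).symm
  have heq := Finset.eq_of_subset_of_card_le hsub hcard
  have hmem : i ∈ (Finset.univ.filter fun k => v k = x) := by
    rw [Finset.mem_filter]; exact ⟨Finset.mem_univ _, hvx⟩
  rw [← heq, Finset.mem_filter] at hmem
  exact hux hmem.2

lemma words_eq_of_D_zero (a : Fin σ) (uu vv : Words n σ P)
    (h : ∀ k, uu.1 k ≠ vv.1 k → uu.1 k = a) : uu = vv := by
  have hsub : (Finset.univ.filter fun k => vv.1 k = a)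
      ⊆ (Finset.univ.filter fun k => uu.1 k = a) := by
    intro k hk
    rw [Finset.mem_filter] at hk ⊢
    refine ⟨hk.1, ?_⟩
    by_cases hk2 : uu.1 k = vv.1 k
    · rw [hk2]; exact hk.2
    · exact h k hk2
  have hcard : (Finset.univ.filter fun k => uu.1 k = a).card
      ≤ (Finset.univ.filter fun k => vv.1 k = a).card :=
    le_of_eq ((congrFun uu.2 a).trans (congrFun vv.2 a).symm)
  have heq := Finset.eq_of_subset_of_card_le hsub hcard
  apply Subtype.ext
  funext k
  by_contra hne
  have hua : uu.1 k = a := h k hne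
  have : k ∈ (Finset.univ.filter fun k => vv.1 k = a) := by
    rw [heq, Finset.mem_filter]; exact ⟨Finset.mem_univ _, hua⟩
  rw [Finset.mem_filter] at this
  exact hne (hua.trans this.2.symm)

lemma exists_walk_le (a : Fin σ) (vv : Words n σ P) :
    ∀ (d : ℕ) (uu : Words n σ P),
      (Finset.univ.filter fun k => uu.1 k ≠ vv.1 k ∧ uu.1 k ≠ a).card ≤ d →
      ∃ p : (configGraph n σ P).Walk uu vv, p.length ≤ d := by
  intro d
  induction d with
  | zero =>
    intro uu h
    have h0 : (Finset.univ.filter fun k => uu.1 k ≠ vv.1 k ∧ uu.1 k ≠ a) = ∅ :=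
      Finset.card_eq_zero.mp (Nat.le_zero.mp h)
    have hall : ∀ k, uu.1 k ≠ vv.1 k → uu.1 k = a := by
      intro k hk
      by_contra hka
      have : k ∈ (Finset.univ.filter fun k => uu.1 k ≠ vv.1 k ∧ uu.1 k ≠ a) := by
        rw [Finset.mem_filter]; exact ⟨Finset.mem_univ _, hk, hka⟩
      rw [h0] at this
      exact absurd this (Finset.notMem_empty k)
    have := words_eq_of_D_zero a uu vv hall
    subst this
    exact ⟨SimpleGraph.Walk.nil, by simp⟩
  | succ d ih =>
    intro uu h
    by_cases huv : uu = vv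
    · subst huv; exact ⟨SimpleGraph.Walk.nil, by simp⟩
    -- D-set is nonempty
    have hDpos : 0 < (Finset.univ.filter fun k => uu.1 k ≠ vv.1 k ∧ uu.1 k ≠ a).card := by
      by_contra hc
      push_neg at hc
      have h0 : (Finset.univ.filter fun k => uu.1 k ≠ vv.1 k ∧ uu.1 k ≠ a) = ∅ :=
        Finset.card_eq_zero.mp (Nat.le_zero.mp hc)
      apply huv
      apply words_eq_of_D_zero a uu vv
      intro k hk
      by_contra hka
      have : k ∈ (Finset.univ.filter fun k => uu.1 k ≠ vv.1 k ∧ uu.1 k ≠ a) := by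
        rw [Finset.mem_filter]; exact ⟨Finset.mem_univ _, hk, hka⟩
      rw [h0] at this
      exact absurd this (Finset.notMem_empty k)
    have hparikh : parikh uu.1 = parikh vv.1 := uu.2.trans vv.2.symm
    have key : ∃ (i jj : Fin n), (uu.1 i ≠ vv.1 i ∧ uu.1 i ≠ a) ∧ uu.1 i ≠ uu.1 jj ∧
        ((uu.1 ∘ Equiv.swap i jj) i = vv.1 i ∨ (uu.1 ∘ Equiv.swap i jj) i = a) ∧
        (∀ k, k ≠ i → (uu.1 ∘ Equiv.swap i jj) k ≠ vv.1 k → (uu.1 ∘ Equiv.swap i jj) k ≠ a →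
          (uu.1 k ≠ vv.1 k ∧ uu.1 k ≠ a)) := by
      by_cases hA : ∃ i0, uu.1 i0 ≠ vv.1 i0 ∧ uu.1 i0 ≠ a ∧ vv.1 i0 ≠ a
      · -- Case A
        obtain ⟨i, hiv, hia, hva⟩ := hA
        obtain ⟨j, hj1, hj2⟩ := exists_mismatch_partner hparikh rfl hiv
        have hne : uu.1 i ≠ uu.1 j := by rw [hj1]; exact hiv
        refine ⟨i, j, ⟨hiv, hia⟩, hne, ?_, ?_⟩
        · left; simp [Equiv.swap_apply_left, hj1]
        · intro k hki hkv hka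
          by_cases hkj : k = j
          · constructor
            · rw [hkj, hj1]; exact fun h => hj2 h.symm
            · rw [hkj, hj1]; exact hva
          · have : (uu.1 ∘ Equiv.swap i j) k = uu.1 k := by
              simp [Equiv.swap_apply_of_ne_of_ne hki hkj]
            rw [this] at hkv hka
            exact ⟨hkv, hka⟩
      · -- Case B
        push_neg at hA
        obtain ⟨i, hi⟩ := Finset.card_pos.mp hDpos
        rw [Finset.mem_filter] at hi
        obtain ⟨-, hiv, hia⟩ := hi
        have hva : vv.1 i = a := hA i hiv hia
        have hvix : vv.1 i ≠ uu.1 i := by rw [hva]; exact fun h => hia h.symm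
        obtain ⟨j, hj1, hj2⟩ := exists_mismatch_partner (hparikh.symm) rfl hvix
        -- hj1 : vv.1 j = uu.1 i, hj2 : uu.1 j ≠ uu.1 i
        have hja : uu.1 j = a := by
          by_contra hja
          have hjv : uu.1 j ≠ vv.1 j := by rw [hj1]; exact hj2
          have := hA j hjv hja
          rw [hj1] at this
          exact hia this
        have hne : uu.1 i ≠ uu.1 j := fun h => hj2 h.symm
        refine ⟨i, j, ⟨hiv, hia⟩, hne, ?_, ?_⟩
        · right; simp [Equiv.swap_apply_left, hja]
        · intro k hki hkv hka
          by_cases hkj : k = j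
          · exfalso
            apply hkv
            have : (uu.1 ∘ Equiv.swap i j) k = uu.1 i := by rw [hkj]; simp
            rw [this, hkj, hj1]
          · have : (uu.1 ∘ Equiv.swap i j) k = uu.1 k := by
              simp [Equiv.swap_apply_of_ne_of_ne hki hkj]
            rw [this] at hkv hka
            exact ⟨hkv, hka⟩
    obtain ⟨i, j, ⟨hiv, hia⟩, hne, hfix, hrest⟩ := key
    have hij : i ≠ j := fun h => hne (by rw [h])
    set u' : Fin n → Fin σ := uu.1 ∘ Equiv.swap i j with hu'
    have hu'p : parikh u' = P := by rw [hu', parikh_comp_perm]; exact uu.2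
    set uu' : Words n σ P := ⟨u', hu'p⟩ with huu'
    have hadj : (configGraph n σ P).Adj uu uu' := by
      rw [configGraph, SimpleGraph.fromRel_adj]
      constructor
      · intro hcon
        apply hne
        have := congrArg (fun z : Words n σ P => z.1 i) hcon
        simp only [huu', hu'] at this
        rw [show (uu.1 ∘ Equiv.swap i j) i = uu.1 j by simp] at this
        exact this
      · exact Or.inl ⟨i, j, hij, hne, rfl⟩
    have hsubset : (Finset.univ.filter fun k => uu'.1 k ≠ vv.1 k ∧ uu'.1 k ≠ a)
        ⊆ (Finset.univ.filter fun k => uu.1 k ≠ vv.1 k ∧ uu.1 k ≠ a).erase i := by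
      intro k hk
      rw [Finset.mem_filter] at hk
      obtain ⟨-, hk1, hk2⟩ := hk
      have hki : k ≠ i := by
        intro hkeq
        rcases hfix with hf | hf
        · apply hk1; rw [hkeq]; exact hf
        · apply hk2; rw [hkeq]; exact hf
      rw [Finset.mem_erase]
      refine ⟨hki, ?_⟩
      rw [Finset.mem_filter]
      exact ⟨Finset.mem_univ _, hrest k hki hk1 hk2⟩
    have hmem : i ∈ (Finset.univ.filter fun k => uu.1 k ≠ vv.1 k ∧ uu.1 k ≠ a) := by
      rw [Finset.mem_filter]; exact ⟨Finset.mem_univ _, hiv, hia⟩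
    have hcard : (Finset.univ.filter fun k => uu'.1 k ≠ vv.1 k ∧ uu'.1 k ≠ a).card ≤ d := by
      calc (Finset.univ.filter fun k => uu'.1 k ≠ vv.1 k ∧ uu'.1 k ≠ a).card
          ≤ ((Finset.univ.filter fun k => uu.1 k ≠ vv.1 k ∧ uu.1 k ≠ a).erase i).card :=
            Finset.card_le_card hsubset
        _ = (Finset.univ.filter fun k => uu.1 k ≠ vv.1 k ∧ uu.1 k ≠ a).card - 1 :=
            Finset.card_erase_of_mem hmem
        _ ≤ d := by omega
    obtain ⟨q, hq⟩ := ih uu' hcard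
    exact ⟨SimpleGraph.Walk.cons hadj q, by simp; omega⟩

end Upper

section Lower
variable {n σ : ℕ} {P : Fin σ → ℕ}

def Phi (g : Fin n → Prop) [DecidablePred g] (t : Fin n → ℕ) (ρ : Fin σ → ℕ)
    (uu : Words n σ P) : ℕ :=
  (Finset.univ.filter fun k => g k ∧ t k ≤ ρ (uu.1 k)).card

lemma phi_adj (g : Fin n → Prop) [DecidablePred g] (t : Fin n → ℕ) (ρ : Fin σ → ℕ)
    {uu uu' : Words n σ P}
    (h : (configGraph n σ P).Adj uu uu') : Phi g t ρ uu' ≤ Phi g t ρ uu + 1 := by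
  rw [configGraph, SimpleGraph.fromRel_adj] at h
  obtain ⟨-, h | h⟩ := h
  · obtain ⟨i, j, hij, hne, he⟩ := h
    show (Finset.univ.filter fun k => g k ∧ t k ≤ ρ (uu'.1 k)).card ≤ _
    rw [he]
    exact phi_lipschitz g t ρ uu.1 i j
  · obtain ⟨i, j, hij, hne, he⟩ := h
    have he' : uu'.1 = uu.1 ∘ Equiv.swap i j := by
      rw [he]
      funext k
      simp
    show (Finset.univ.filter fun k => g k ∧ t k ≤ ρ (uu'.1 k)).card ≤ _
    rw [he']
    exact phi_lipschitz g t ρ uu.1 i j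

lemma phi_walk (g : Fin n → Prop) [DecidablePred g] (t : Fin n → ℕ) (ρ : Fin σ → ℕ)
    {uu vv : Words n σ P} (p : (configGraph n σ P).Walk uu vv) :
    Phi g t ρ vv ≤ Phi g t ρ uu + p.length := by
  induction p with
  | nil => simp
  | @cons u v w h q ih =>
    have h1 := phi_adj g t ρ h
    simp only [SimpleGraph.Walk.length_cons]
    omega

end Lower

theorem stmt12 (n σ : ℕ) (P : Fin σ → ℕ) (hn : ∑ i, P i = n)
    (htwo : ∃ i j : Fin σ, i ≠ j ∧ P i ≠ 0 ∧ P j ≠ 0) :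
    ∃ w v : Words n σ P,
      (configGraph n σ P).dist w v = n - Finset.univ.sup P := by
  classical
  obtain ⟨i0, j0, hij0, hi0, hj0⟩ := htwo
  obtain ⟨a, -, ha⟩ := Finset.exists_mem_eq_sup (Finset.univ : Finset (Fin σ))
    ⟨i0, Finset.mem_univ i0⟩ P
  have hmax : ∀ x, P x ≤ P a := fun x => ha ▸ Finset.le_sup (Finset.mem_univ x)
  have hlenW : (WL P a).length = n := (length_WL P a hmax).trans hn
  have hlenV : (VL P a).length = n := (length_VL P a hmax).trans hn
  set w0 : Fin n → Fin σ := fun i => (WL P a).get (Fin.cast hlenW.symm i) with hw0def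
  set v0 : Fin n → Fin σ := fun i => (VL P a).get (Fin.cast hlenV.symm i) with hv0def
  have hcount : ∀ (L : List (Fin σ)) (x : Fin σ),
      L.countP (fun b => decide (b = x)) = L.count x := by
    intro L x
    rw [List.count_eq_countP]
    apply List.countP_congr
    intro b _
    simp [beq_iff_eq]
  have hw0 : parikh w0 = P := by
    funext x
    show (Finset.univ.filter fun i => w0 i = x).card = P x
    rw [show (Finset.univ.filter fun i => w0 i = x)
        = (Finset.univ.filter fun i : Fin n => (WL P a).get (Fin.cast hlenW.symm i) = x)
        from rfl]
    rw [card_filter_get' (WL P a) hlenW (fun b => b = x)]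
    rw [hcount]
    exact count_WL P a hmax x
  have hv0 : parikh v0 = P := by
    funext x
    show (Finset.univ.filter fun i => v0 i = x).card = P x
    rw [show (Finset.univ.filter fun i => v0 i = x)
        = (Finset.univ.filter fun i : Fin n => (VL P a).get (Fin.cast hlenV.symm i) = x)
        from rfl]
    rw [card_filter_get' (VL P a) hlenV (fun b => b = x)]
    rw [hcount]
    exact count_VL P a hmax x
  have hzlen : ((WL P a).zip (VL P a)).length = n := by
    rw [List.length_zip, hlenW, hlenV]
    exact Nat.min_self n
  have hbridge : ∀ (p : Fin σ × Fin σ → Prop) (_ : DecidablePred p),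
      (Finset.univ.filter fun k : Fin n => p (w0 k, v0 k)).card
        = ((WL P a).zip (VL P a)).countP (fun q => decide (p q)) := by
    intro p inst
    rw [← card_filter_get' _ hzlen p]
    congr 1
    apply Finset.filter_congr
    intro k _
    have hg : ((WL P a).zip (VL P a)).get (Fin.cast hzlen.symm k) = (w0 k, v0 k) := by
      rw [List.get_eq_getElem, List.getElem_zip]
      rfl
    rw [hg]
  have hD : (Finset.univ.filter fun k : Fin n => w0 k ≠ v0 k ∧ w0 k ≠ a).card = n - P a := by
    rw [hbridge (fun q => q.1 ≠ q.2 ∧ q.1 ≠ a) inferInstance]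
    rw [show ((WL P a).zip (VL P a)).countP (fun q => decide (q.1 ≠ q.2 ∧ q.1 ≠ a))
        = ((WL P a).zip (VL P a)).countP (fun q => decide (q.1 ≠ a) && decide (q.1 ≠ q.2)) by
      apply List.countP_congr
      intro q _
      simp [Bool.and_comm]]
    rw [countP_F2_total P a hmax, hn]
  have hPhiv : (Finset.univ.filter fun k : Fin n => rho a (w0 k) < rho a (v0 k)).card
      = n - P a := by
    rw [hbridge (fun q => rho a q.1 < rho a q.2) inferInstance]
    rw [countP_F1_total P a hmax, hn]
  set ww : Words n σ P := ⟨w0, hw0⟩ with hwwdef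
  set vv : Words n σ P := ⟨v0, hv0⟩ with hvvdef
  set g : Fin n → Prop := fun k => rho a (w0 k) < rho a (v0 k) with hgdef
  set t : Fin n → ℕ := fun k => rho a (v0 k) with htdef
  have hPhiV : Phi g t (rho a) vv = n - P a := by
    rw [Phi]
    rw [show (Finset.univ.filter fun k : Fin n => g k ∧ t k ≤ rho a (vv.1 k))
        = (Finset.univ.filter fun k : Fin n => g k) from
      Finset.filter_congr (fun k _ => by simp [htdef, hvvdef])]
    exact hPhiv
  have hPhiW : Phi g t (rho a) ww = 0 := by
    rw [Phi, Finset.card_eq_zero, Finset.filter_eq_empty_iff]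
    intro k _
    rintro ⟨hg1, hle⟩
    rw [hgdef] at hg1
    rw [htdef, hwwdef] at hle
    simp only at hg1 hle
    omega
  obtain ⟨p, hp⟩ := exists_walk_le a vv (n - P a) ww (le_of_eq hD)
  have hupper : (configGraph n σ P).dist ww vv ≤ n - P a :=
    le_trans (SimpleGraph.dist_le p) hp
  have hreach : (configGraph n σ P).Reachable ww vv := ⟨p⟩
  obtain ⟨q, hq⟩ := hreach.exists_walk_length_eq_dist
  have hlower : n - P a ≤ (configGraph n σ P).dist ww vv := by
    have := phi_walk g t (rho a) q
    rw [hq, hPhiV, hPhiW] at this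
    omega
  exact ⟨ww, vv, by rw [ha]; exact le_antisymm hupper hlower⟩
end
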